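/- Let c ≥ 1, let F be a group and let R ≤ K be normal subgroups of F. Then the sequence of group homomorphisms induced by the inclusions, 1 → (R ∩ ⟨T_{c+1}(F) ∩ K⟩)/⟨T_{c+1}(F) ∩ R⟩ → (R ∩ γ_{c+1}(F))/⟨T_{c+1}(F) ∩ R⟩ → (K ∩ γ_{c+1}(F))/⟨T_{c+1}(F) ∩ K⟩ → ((K ∩ γ_{c+1}(F))·R)/(⟨T_{c+1}(F) ∩ K⟩·R) → 1, is exact: the first map is injective, the image of each map equals the kernel of the next, and the last map is surjective. -/

import Mathlib

open Subgroup
open scoped commutatorElement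

/-- `Tset G c` is the set `T_{c+1}(G)` of left-normed commutators of weight `c+1` in `G`:
`Tset G 0 = G` (weight-one "commutators", i.e. all elements), and
`Tset G (n+1) = {⁅a, g⁆ | a ∈ Tset G n, g ∈ G}`. -/
def Tset (G : Type*) [Group G] : ℕ → Set G
  | 0 => Set.univ
  | n + 1 => {x | ∃ a ∈ Tset G n, ∃ g : G, x = ⁅a, g⁆}

theorem Tset_conj {G : Type*} [Group G] (n : ℕ) {x : G} (hx : x ∈ Tset G n) (g : G) :
    g * x * g⁻¹ ∈ Tset G n := by
  induction n generalizing x with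
  | zero => trivial
  | succ n ih =>
      obtain ⟨a, ha, b, rfl⟩ := hx
      exact ⟨g * a * g⁻¹, ih ha, g * b * g⁻¹, conjugate_commutatorElement a b g⟩

/-- `Tcl c S = ⟨T_{c+1}(G) ∩ S⟩`, the subgroup generated by the left-normed commutators of
weight `c+1` lying in `S`. -/
def Tcl {G : Type*} [Group G] (c : ℕ) (S : Subgroup G) : Subgroup G :=
  Subgroup.closure (Tset G c ∩ (S : Set G))

instance Tcl_normal {G : Type*} [Group G] (c : ℕ) (S : Subgroup G) [hS : S.Normal] :
    (Tcl c S).Normal := by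
  constructor
  intro n hn g
  induction hn using Subgroup.closure_induction with
  | mem x hx =>
      exact Subgroup.subset_closure ⟨Tset_conj c hx.1 g, hS.conj_mem x hx.2 g⟩
  | one => simpa using (Tcl c S).one_mem
  | mul x y _ _ hx hy =>
      have h : g * (x * y) * g⁻¹ = (g * x * g⁻¹) * (g * y * g⁻¹) := by group
      rw [h]; exact mul_mem hx hy
  | inv x _ hx =>
      have h : g * x⁻¹ * g⁻¹ = (g * x * g⁻¹)⁻¹ := by group
      rw [h]; exact inv_mem hx

theorem Tset_subset_lcs {G : Type*} [Group G] (n : ℕ) :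
    Tset G n ⊆ ((⊤ : Subgroup G).lowerCentralSeries n : Set G) := by
  induction n with
  | zero => intro x _; simp [Subgroup.lowerCentralSeries_zero]
  | succ n ih =>
      rintro x ⟨a, ha, b, rfl⟩
      rw [Subgroup.lowerCentralSeries_succ]
      exact Subgroup.commutator_mem_commutator (ih ha) (Subgroup.mem_top b)

theorem Tcl_le {G : Type*} [Group G] (c : ℕ) (S : Subgroup G) : Tcl c S ≤ S :=
  (Subgroup.closure_le S).2 Set.inter_subset_right

theorem Tcl_le_lcs {G : Type*} [Group G] (c : ℕ) (S : Subgroup G) :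
    Tcl c S ≤ (⊤ : Subgroup G).lowerCentralSeries c :=
  (Subgroup.closure_le _).2 fun _ hx => Tset_subset_lcs c hx.1

theorem Tcl_mono {G : Type*} [Group G] (c : ℕ) {R K : Subgroup G} (h : R ≤ K) :
    Tcl c R ≤ Tcl c K :=
  Subgroup.closure_mono (Set.inter_subset_inter_right _ h)

theorem subgroupOf_le_comap_inclusion {F : Type*} [Group F] {A B H₁ H₂ : Subgroup F}
    (hH : H₁ ≤ H₂) (hAB : A ≤ B) :
    A.subgroupOf H₁ ≤ (B.subgroupOf H₂).comap (Subgroup.inclusion hH) := by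
  intro x hx
  rw [Subgroup.mem_comap, Subgroup.mem_subgroupOf, Subgroup.coe_inclusion]
  exact hAB (Subgroup.mem_subgroupOf.mp hx)

variable {F : Type*} [Group F]

/-- The map `(R ∩ ⟨T_{c+1}(F) ∩ K⟩)/⟨T_{c+1}(F) ∩ R⟩ → (R ∩ γ_{c+1}(F))/⟨T_{c+1}(F) ∩ R⟩`
induced by the inclusion (using `⟨T_{c+1}(F) ∩ K⟩ ≤ γ_{c+1}(F)`). -/
def mapET (c : ℕ) (R K : Subgroup F) [R.Normal] [K.Normal] :
    (↥(R ⊓ Tcl c K) ⧸ (Tcl c R).subgroupOf (R ⊓ Tcl c K)) →*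
      (↥(R ⊓ (⊤ : Subgroup F).lowerCentralSeries c) ⧸ (Tcl c R).subgroupOf (R ⊓ (⊤ : Subgroup F).lowerCentralSeries c)) :=
  QuotientGroup.map _ _ (Subgroup.inclusion (inf_le_inf_left R (Tcl_le_lcs c K)))
    (subgroupOf_le_comap_inclusion _ le_rfl)

/-- The map `(R ∩ γ_{c+1}(F))/⟨T_{c+1}(F) ∩ R⟩ → (K ∩ γ_{c+1}(F))/⟨T_{c+1}(F) ∩ K⟩`
induced by the inclusion. -/
def mapRKT (c : ℕ) (R K : Subgroup F) [R.Normal] [K.Normal] (hRK : R ≤ K) :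
    (↥(R ⊓ (⊤ : Subgroup F).lowerCentralSeries c) ⧸ (Tcl c R).subgroupOf (R ⊓ (⊤ : Subgroup F).lowerCentralSeries c)) →*
      (↥(K ⊓ (⊤ : Subgroup F).lowerCentralSeries c) ⧸ (Tcl c K).subgroupOf (K ⊓ (⊤ : Subgroup F).lowerCentralSeries c)) :=
  QuotientGroup.map _ _ (Subgroup.inclusion (inf_le_inf_right _ hRK))
    (subgroupOf_le_comap_inclusion _ (Tcl_mono c hRK))

/-- The map `(K ∩ γ_{c+1}(F))/⟨T_{c+1}(F) ∩ K⟩ → ((K ∩ γ_{c+1}(F))·R)/(⟨T_{c+1}(F) ∩ K⟩·R)`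
induced by the inclusion, where the products of normal subgroups are the joins
`(K ⊓ (⊤ : Subgroup F).lowerCentralSeries c) ⊔ R` and `Tcl c K ⊔ R`. -/
def mapQT (c : ℕ) (R K : Subgroup F) [R.Normal] [K.Normal] :
    (↥(K ⊓ (⊤ : Subgroup F).lowerCentralSeries c) ⧸ (Tcl c K).subgroupOf (K ⊓ (⊤ : Subgroup F).lowerCentralSeries c)) →*
      (↥((K ⊓ (⊤ : Subgroup F).lowerCentralSeries c) ⊔ R) ⧸
        (Tcl c K ⊔ R).subgroupOf ((K ⊓ (⊤ : Subgroup F).lowerCentralSeries c) ⊔ R)) :=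
  QuotientGroup.map _ _ (Subgroup.inclusion le_sup_left)
    (subgroupOf_le_comap_inclusion _ le_sup_left)

open scoped Pointwise in
/-- for `c ≥ 1` and normal subgroups `R ≤ K` of `F`, the sequence
`1 → (R ∩ ⟨T_{c+1}(F) ∩ K⟩)/⟨T_{c+1}(F) ∩ R⟩ → (R ∩ γ_{c+1}(F))/⟨T_{c+1}(F) ∩ R⟩
→ (K ∩ γ_{c+1}(F))/⟨T_{c+1}(F) ∩ K⟩ → ((K ∩ γ_{c+1}(F))·R)/(⟨T_{c+1}(F) ∩ K⟩·R) → 1`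
of homomorphisms induced by the inclusions is exact. -/
theorem stmt17 (c : ℕ) (hc : 1 ≤ c) (R K : Subgroup F) [R.Normal] [K.Normal] (hRK : R ≤ K) :
    Function.Injective (mapET c R K) ∧
      (mapET c R K).range = (mapRKT c R K hRK).ker ∧
      (mapRKT c R K hRK).range = (mapQT c R K).ker ∧
      Function.Surjective (mapQT c R K) := by
  refine ⟨?_, ?_, ?_, ?_⟩
  · rw [injective_iff_map_eq_one]
    intro a ha
    obtain ⟨x, rfl⟩ := QuotientGroup.mk_surjective a
    rw [mapET, QuotientGroup.map_mk, QuotientGroup.eq_one_iff,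
      Subgroup.mem_subgroupOf, Subgroup.coe_inclusion] at ha
    rw [QuotientGroup.eq_one_iff, Subgroup.mem_subgroupOf]
    exact ha
  · ext a
    obtain ⟨x, rfl⟩ := QuotientGroup.mk_surjective a
    rw [MonoidHom.mem_ker, mapRKT, QuotientGroup.map_mk, QuotientGroup.eq_one_iff,
      Subgroup.mem_subgroupOf, Subgroup.coe_inclusion]
    constructor
    · rintro ⟨b, hb⟩
      obtain ⟨y, rfl⟩ := QuotientGroup.mk_surjective b
      rw [mapET, QuotientGroup.map_mk, QuotientGroup.eq] at hb
      simp only [Subgroup.mem_subgroupOf, InvMemClass.coe_inv, MulMemClass.coe_mul,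
        Subgroup.coe_inclusion] at hb
      have hy : (↑y : F) ∈ Tcl c K := (Subgroup.mem_inf.mp y.2).2
      have hx : (↑x : F) = ↑y * ((↑y : F)⁻¹ * ↑x) := by group
      rw [hx]
      exact mul_mem hy (Tcl_mono c hRK hb)
    · intro hx
      refine ⟨QuotientGroup.mk ⟨(↑x : F), Subgroup.mem_inf.mpr
        ⟨(Subgroup.mem_inf.mp x.2).1, hx⟩⟩, ?_⟩
      rw [mapET, QuotientGroup.map_mk]
      congr 1
  · ext a
    obtain ⟨x, rfl⟩ := QuotientGroup.mk_surjective a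
    rw [MonoidHom.mem_ker, mapQT, QuotientGroup.map_mk, QuotientGroup.eq_one_iff,
      Subgroup.mem_subgroupOf, Subgroup.coe_inclusion]
    constructor
    · rintro ⟨b, hb⟩
      obtain ⟨y, rfl⟩ := QuotientGroup.mk_surjective b
      rw [mapRKT, QuotientGroup.map_mk, QuotientGroup.eq] at hb
      simp only [Subgroup.mem_subgroupOf, InvMemClass.coe_inv, MulMemClass.coe_mul,
        Subgroup.coe_inclusion] at hb
      have hy : (↑y : F) ∈ R := (Subgroup.mem_inf.mp y.2).1
      have hx : (↑x : F) = ↑y * ((↑y : F)⁻¹ * ↑x) := by group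
      rw [hx]
      exact mul_mem (Subgroup.mem_sup_right hy) (Subgroup.mem_sup_left hb)
    · intro hx
      have hx' : (↑x : F) ∈ ((Tcl c K : Set F) * (R : Set F)) := by
        rw [← Subgroup.normal_mul]; exact hx
      obtain ⟨t, ht, r, hr, htr⟩ := hx'
      have hrγ : r ∈ (⊤ : Subgroup F).lowerCentralSeries c := by
        have : r = t⁻¹ * ↑x := by rw [← htr]; group
        rw [this]
        exact mul_mem (inv_mem (Tcl_le_lcs c K ht)) (Subgroup.mem_inf.mp x.2).2
      refine ⟨QuotientGroup.mk ⟨r, Subgroup.mem_inf.mpr ⟨hr, hrγ⟩⟩, ?_⟩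
      rw [mapRKT, QuotientGroup.map_mk, QuotientGroup.eq]
      simp only [Subgroup.mem_subgroupOf, InvMemClass.coe_inv, MulMemClass.coe_mul,
        Subgroup.coe_inclusion]
      have : r⁻¹ * (↑x : F) = r⁻¹ * t * r⁻¹⁻¹ := by rw [← htr]; group
      rw [this]
      exact (Tcl_normal c K).conj_mem t ht r⁻¹
  · intro a
    obtain ⟨x, rfl⟩ := QuotientGroup.mk_surjective a
    have hx : (↑x : F) ∈ (((K ⊓ (⊤ : Subgroup F).lowerCentralSeries c : Subgroup F) : Set F) * (R : Set F)) := by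
      rw [← Subgroup.mul_normal]; exact x.2
    obtain ⟨u, hu, r, hr, hur⟩ := hx
    refine ⟨QuotientGroup.mk ⟨u, hu⟩, ?_⟩
    rw [mapQT, QuotientGroup.map_mk, QuotientGroup.eq]
    simp only [Subgroup.mem_subgroupOf, InvMemClass.coe_inv, MulMemClass.coe_mul,
      Subgroup.coe_inclusion]
    have : u⁻¹ * (↑x : F) = r := by rw [← hur]; group
    rw [this]
    exact Subgroup.mem_sup_right hr
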